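/- Let m and m' be two incentive-compatible mechanisms that induce the same indirect utility U, let g : S → ℝⁿ be continuous, κ > 0, and let F be a Borel probability measure on S that is absolutely continuous with respect to Lebesgue measure. Then the principal's expected payoffs coincide: ∫_S ∫ (⟪a,g(s)⟫ + κ·b(a)) dm(s)(a) dF(s) = ∫_S ∫ (⟪a,g(s)⟫ + κ·b(a)) dm'(s)(a) dF(s). -/

import Mathlib

open MeasureTheory Filter
open scoped RealInnerProductSpace

noncomputable section

/-- The first-best payoff `h(s) = sup_{a ∈ ℝⁿ} (⟪a,s⟫ + b(a))`. -/
def firstBest {n : ℕ} (b : EuclideanSpace ℝ (Fin n) → ℝ)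
    (s : EuclideanSpace ℝ (Fin n)) : ℝ :=
  sSup (Set.range fun a : EuclideanSpace ℝ (Fin n) => ⟪a, s⟫ + b a)

/-- A mechanism: a measurable map from types to Borel probability measures on ℝⁿ, with
finite first moments, and with `b` integrable. -/
def IsMechanism {n : ℕ} (b : EuclideanSpace ℝ (Fin n) → ℝ)
    (S : Set (EuclideanSpace ℝ (Fin n)))
    (m : EuclideanSpace ℝ (Fin n) → Measure (EuclideanSpace ℝ (Fin n))) : Prop :=
  (∀ A : Set (EuclideanSpace ℝ (Fin n)), MeasurableSet A → Measurable fun s => m s A) ∧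
  ∀ s ∈ S, IsProbabilityMeasure (m s) ∧
    Integrable (fun a => a) (m s) ∧ Integrable b (m s)

/-- Agent's payoff in state `s` from reporting `s'`:
`u_A(m(s'),s) = ⟪β(s'), s⟫ + ∫ b dm(s')`, where `β(s') = ∫ a dm(s')(a)`. -/
def agentPayoff {n : ℕ} (b : EuclideanSpace ℝ (Fin n) → ℝ)
    (m : EuclideanSpace ℝ (Fin n) → Measure (EuclideanSpace ℝ (Fin n)))
    (s' s : EuclideanSpace ℝ (Fin n)) : ℝ :=
  ⟪∫ a, a ∂(m s'), s⟫ + ∫ a, b a ∂(m s')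

/-- Incentive compatibility: truth-telling is optimal for every type in `S`. -/
def IncentiveCompatible {n : ℕ} (b : EuclideanSpace ℝ (Fin n) → ℝ)
    (S : Set (EuclideanSpace ℝ (Fin n)))
    (m : EuclideanSpace ℝ (Fin n) → Measure (EuclideanSpace ℝ (Fin n))) : Prop :=
  ∀ s ∈ S, ∀ s' ∈ S, agentPayoff b m s' s ≤ agentPayoff b m s s

/-- The indirect utility of a mechanism: `U(s) = sup_{s' ∈ S} u_A(m(s'), s)`. -/
def indirectUtility {n : ℕ} (b : EuclideanSpace ℝ (Fin n) → ℝ)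
    (S : Set (EuclideanSpace ℝ (Fin n)))
    (m : EuclideanSpace ℝ (Fin n) → Measure (EuclideanSpace ℝ (Fin n)))
    (s : EuclideanSpace ℝ (Fin n)) : ℝ :=
  sSup ((fun s' => agentPayoff b m s' s) '' S)

lemma exists_bound {n : ℕ} {b : EuclideanSpace ℝ (Fin n) → ℝ}
    (hbcont : Continuous b)
    (hblim : Tendsto (fun a => b a / ‖a‖) (cocompact (EuclideanSpace ℝ (Fin n))) atBot)
    (R : ℝ) : ∃ C, ∀ a : EuclideanSpace ℝ (Fin n), R * ‖a‖ + b a ≤ C := by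
  have h2 : Tendsto (fun a : EuclideanSpace ℝ (Fin n) => R * ‖a‖ + b a)
      (cocompact _) atBot := by
    have hev : (fun a : EuclideanSpace ℝ (Fin n) => ‖a‖ * (R + b a / ‖a‖))
        =ᶠ[cocompact (EuclideanSpace ℝ (Fin n))]
        (fun a => R * ‖a‖ + b a) := by
      filter_upwards [tendsto_norm_cocompact_atTop.eventually_ge_atTop 1] with a ha
      have hne : ‖a‖ ≠ 0 := by linarith
      field_simp
    exact Tendsto.congr' hev (tendsto_norm_cocompact_atTop.atTop_mul_atBot₀
      (tendsto_atBot_add_const_left _ R hblim))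
  obtain ⟨x, hx⟩ := ((continuous_const.mul continuous_norm).add hbcont).exists_forall_ge h2
  exact ⟨_, hx⟩

lemma inner_integrable {n : ℕ} {μ : Measure (EuclideanSpace ℝ (Fin n))}
    (hint : Integrable (fun a => a) μ) (x : EuclideanSpace ℝ (Fin n)) :
    Integrable (fun a : EuclideanSpace ℝ (Fin n) => ⟪a, x⟫) μ := by
  have heq : (fun a : EuclideanSpace ℝ (Fin n) => ⟪a, x⟫)
      = fun a => (innerSL ℝ x) a := funext fun a => real_inner_comm _ _
  rw [heq]
  exact (innerSL ℝ x).integrable_comp hint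

lemma inner_integral_eq {n : ℕ} {μ : Measure (EuclideanSpace ℝ (Fin n))}
    (hint : Integrable (fun a => a) μ) (x : EuclideanSpace ℝ (Fin n)) :
    ⟪∫ a, a ∂μ, x⟫ = ∫ a, ⟪a, x⟫ ∂μ := by
  calc ⟪∫ a, a ∂μ, x⟫ = ⟪x, ∫ a, a ∂μ⟫ := real_inner_comm _ _
    _ = ∫ a, ⟪x, a⟫ ∂μ := (integral_inner hint x).symm
    _ = ∫ a, ⟪a, x⟫ ∂μ := integral_congr_ae (.of_forall fun a => real_inner_comm _ _)

lemma agentPayoff_eq_integral' {n : ℕ} (b : EuclideanSpace ℝ (Fin n) → ℝ)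
    (m : EuclideanSpace ℝ (Fin n) → Measure (EuclideanSpace ℝ (Fin n)))
    {s' : EuclideanSpace ℝ (Fin n)}
    (hint : Integrable (fun a => a) (m s')) (hb : Integrable b (m s'))
    (x : EuclideanSpace ℝ (Fin n)) :
    agentPayoff b m s' x = ∫ a, (⟪a, x⟫ + b a) ∂(m s') := by
  rw [agentPayoff, integral_add (inner_integrable hint x) hb, inner_integral_eq hint x]

lemma agentPayoff_le' {n : ℕ} {b : EuclideanSpace ℝ (Fin n) → ℝ}
    {μ : Measure (EuclideanSpace ℝ (Fin n))} (hprob : IsProbabilityMeasure μ)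
    (hint : Integrable (fun a => a) μ) (hb : Integrable b μ)
    {R C : ℝ} (hC : ∀ a : EuclideanSpace ℝ (Fin n), R * ‖a‖ + b a ≤ C)
    {x : EuclideanSpace ℝ (Fin n)} (hx : ‖x‖ ≤ R) :
    ∫ a, (⟪a, x⟫ + b a) ∂μ ≤ C := by
  have h := integral_mono ((inner_integrable hint x).add hb) (integrable_const C) ?_
  · simpa using h
  · intro a
    have h3 : ⟪a, x⟫ ≤ R * ‖a‖ := by
      calc ⟪a, x⟫ ≤ ‖a‖ * ‖x‖ := real_inner_le_norm a x
        _ ≤ ‖a‖ * R := mul_le_mul_of_nonneg_left hx (norm_nonneg a)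
        _ = R * ‖a‖ := mul_comm _ _
    have := hC a
    simp only [Pi.add_apply]
    linarith

lemma inner_le_fderiv' {n : ℕ} {U : EuclideanSpace ℝ (Fin n) → ℝ}
    {s β : EuclideanSpace ℝ (Fin n)}
    (hsub : ∀ t, U s + ⟪β, t - s⟫ ≤ U t)
    (hd : DifferentiableAt ℝ U s) (v : EuclideanSpace ℝ (Fin n)) :
    ⟪β, v⟫ ≤ fderiv ℝ U s v := by
  have hline : HasDerivAt (fun h : ℝ => s + h • v) v 0 := by
    simpa using ((hasDerivAt_id (0:ℝ)).smul_const v).const_add s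
  have hg : HasFDerivAt U (fderiv ℝ U s) (s + (0:ℝ) • v) := by
    simpa using hd.hasFDerivAt
  have hcomp : HasDerivAt (fun h : ℝ => U (s + h • v)) (fderiv ℝ U s v) 0 :=
    hg.comp_hasDerivAt 0 hline
  have h2 : Tendsto (slope (fun h : ℝ => U (s + h • v)) 0) (nhdsWithin (0:ℝ) (Set.Ioi 0))
      (nhds (fderiv ℝ U s v)) :=
    (hasDerivAt_iff_tendsto_slope.mp hcomp).mono_left
      (nhdsWithin_mono 0 (fun x hx => ne_of_gt hx))
  refine ge_of_tendsto h2 ?_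
  filter_upwards [self_mem_nhdsWithin] with h hh
  have hsub2 := hsub (s + h • v)
  have hs' : ⟪β, (s + h • v) - s⟫ = h * ⟪β, v⟫ := by
    simp [inner_smul_right]
  rw [hs'] at hsub2
  rw [slope_def_field]
  rw [le_div_iff₀ (by simpa using hh)]
  simp only [sub_zero, zero_smul, add_zero]
  nlinarith

lemma inner_eq_fderiv' {n : ℕ} {U : EuclideanSpace ℝ (Fin n) → ℝ}
    {s β : EuclideanSpace ℝ (Fin n)}
    (hsub : ∀ t, U s + ⟪β, t - s⟫ ≤ U t)
    (hd : DifferentiableAt ℝ U s) (v : EuclideanSpace ℝ (Fin n)) :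
    ⟪β, v⟫ = fderiv ℝ U s v := by
  refine le_antisymm (inner_le_fderiv' hsub hd v) ?_
  have h := inner_le_fderiv' hsub hd (-v)
  rw [inner_neg_right, (fderiv ℝ U s).map_neg] at h
  linarith

lemma principal_integral_eq {n : ℕ} {b : EuclideanSpace ℝ (Fin n) → ℝ}
    {μ : Measure (EuclideanSpace ℝ (Fin n))}
    (hint : Integrable (fun a => a) μ) (hb : Integrable b μ)
    (x : EuclideanSpace ℝ (Fin n)) (κ : ℝ) :
    ∫ a, (⟪a, x⟫ + κ * b a) ∂μ = ⟪∫ a, a ∂μ, x⟫ + κ * ∫ a, b a ∂μ := by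
  rw [integral_add (inner_integrable hint x) (hb.const_mul κ),
    inner_integral_eq hint x, integral_const_mul]

theorem stmt_5 {n : ℕ} (b : EuclideanSpace ℝ (Fin n) → ℝ)
    (hbconc : StrictConcaveOn ℝ Set.univ b)
    (hbdiff : Differentiable ℝ b)
    (K : NNReal) (hblip : LipschitzWith K (gradient b))
    (hblim : Tendsto (fun a => b a / ‖a‖)
      (cocompact (EuclideanSpace ℝ (Fin n))) atBot)
    (S : Set (EuclideanSpace ℝ (Fin n)))
    (hScpt : IsCompact S) (hSconv : Convex ℝ S) (hSne : S.Nonempty)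
    (g : EuclideanSpace ℝ (Fin n) → EuclideanSpace ℝ (Fin n)) (hg : ContinuousOn g S)
    (κ : ℝ) (hκ : 0 < κ)
    (m m' : EuclideanSpace ℝ (Fin n) → Measure (EuclideanSpace ℝ (Fin n)))
    (hm : IsMechanism b S m) (hIC : IncentiveCompatible b S m)
    (hm' : IsMechanism b S m') (hIC' : IncentiveCompatible b S m')
    (hsameU : indirectUtility b S m = indirectUtility b S m')
    (F : Measure (EuclideanSpace ℝ (Fin n)))
    (hFprob : IsProbabilityMeasure F) (hFS : F Sᶜ = 0)
    (hFac : F ≪ MeasureTheory.volume) :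
    (∫ s in S, (∫ a, (⟪a, g s⟫ + κ * b a) ∂(m s)) ∂F)
      = ∫ s in S, (∫ a, (⟪a, g s⟫ + κ * b a) ∂(m' s)) ∂F := by
  classical
  obtain ⟨s₀, hs₀⟩ := hSne
  have hbcont : Continuous b := hbdiff.continuous
  have hmP : ∀ s ∈ S, IsProbabilityMeasure (m s) := fun s hs => (hm.2 s hs).1
  have hmI : ∀ s ∈ S, Integrable (fun a => a) (m s) := fun s hs => (hm.2 s hs).2.1
  have hmB : ∀ s ∈ S, Integrable b (m s) := fun s hs => (hm.2 s hs).2.2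
  have hmP' : ∀ s ∈ S, IsProbabilityMeasure (m' s) := fun s hs => (hm'.2 s hs).1
  have hmI' : ∀ s ∈ S, Integrable (fun a => a) (m' s) := fun s hs => (hm'.2 s hs).2.1
  have hmB' : ∀ s ∈ S, Integrable b (m' s) := fun s hs => (hm'.2 s hs).2.2
  set U := indirectUtility b S m with hUdef
  -- payoff in integral form on S
  have hpay : ∀ s ∈ S, ∀ x, agentPayoff b m s x = ∫ a, (⟪a, x⟫ + b a) ∂(m s) :=
    fun s hs x => agentPayoff_eq_integral' b m (hmI s hs) (hmB s hs) x
  have hpay' : ∀ s ∈ S, ∀ x, agentPayoff b m' s x = ∫ a, (⟪a, x⟫ + b a) ∂(m' s) :=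
    fun s hs x => agentPayoff_eq_integral' b m' (hmI' s hs) (hmB' s hs) x
  -- bounded above
  have hBdd : ∀ x, BddAbove ((fun s' => agentPayoff b m s' x) '' S) := by
    intro x
    obtain ⟨C, hC⟩ := exists_bound hbcont hblim ‖x‖
    refine ⟨C, ?_⟩
    rintro _ ⟨s', hs', rfl⟩
    show agentPayoff b m s' x ≤ C
    rw [hpay s' hs' x]
    exact agentPayoff_le' (hmP s' hs') (hmI s' hs') (hmB s' hs') hC le_rfl
  have hBdd' : ∀ x, BddAbove ((fun s' => agentPayoff b m' s' x) '' S) := by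
    intro x
    obtain ⟨C, hC⟩ := exists_bound hbcont hblim ‖x‖
    refine ⟨C, ?_⟩
    rintro _ ⟨s', hs', rfl⟩
    show agentPayoff b m' s' x ≤ C
    rw [hpay' s' hs' x]
    exact agentPayoff_le' (hmP' s' hs') (hmI' s' hs') (hmB' s' hs') hC le_rfl
  -- indirect utility dominates payoffs
  have hUge : ∀ s ∈ S, ∀ x, agentPayoff b m s x ≤ U x :=
    fun s hs x => le_csSup (hBdd x) (Set.mem_image_of_mem _ hs)
  have hUge' : ∀ s ∈ S, ∀ x, agentPayoff b m' s x ≤ U x := by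
    intro s hs x
    show agentPayoff b m' s x ≤ indirectUtility b S m x
    rw [← hUdef, hsameU]
    exact le_csSup (hBdd' x) (Set.mem_image_of_mem _ hs)
  -- truthful reporting attains the sup
  have hUeq : ∀ s ∈ S, U s = agentPayoff b m s s := by
    intro s hs
    refine IsGreatest.csSup_eq ⟨Set.mem_image_of_mem _ hs, ?_⟩
    rintro _ ⟨s', hs', rfl⟩
    exact hIC s hs s' hs'
  have hUeq' : ∀ s ∈ S, U s = agentPayoff b m' s s := by
    intro s hs
    show indirectUtility b S m s = agentPayoff b m' s s
    rw [← hUdef, hsameU]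
    refine IsGreatest.csSup_eq ⟨Set.mem_image_of_mem _ hs, ?_⟩
    rintro _ ⟨s', hs', rfl⟩
    exact hIC' s hs s' hs'
  -- payoff expansion
  have hexp : ∀ s x t : EuclideanSpace ℝ (Fin n),
      agentPayoff b m s t = agentPayoff b m s x + ⟪∫ a, a ∂(m s), t - x⟫ := by
    intro s x t
    simp only [agentPayoff, inner_sub_right]
    ring
  have hexp' : ∀ s x t : EuclideanSpace ℝ (Fin n),
      agentPayoff b m' s t = agentPayoff b m' s x + ⟪∫ a, a ∂(m' s), t - x⟫ := by
    intro s x t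
    simp only [agentPayoff, inner_sub_right]
    ring
  -- subgradient inequalities
  have hsubm : ∀ s ∈ S, ∀ t, U s + ⟪∫ a, a ∂(m s), t - s⟫ ≤ U t := by
    intro s hs t
    have h1 := hUge s hs t
    rw [hexp s s t] at h1
    rw [hUeq s hs]
    exact h1
  have hsubm' : ∀ s ∈ S, ∀ t, U s + ⟪∫ a, a ∂(m' s), t - s⟫ ≤ U t := by
    intro s hs t
    have h1 := hUge' s hs t
    rw [hexp' s s t] at h1
    rw [hUeq' s hs]
    exact h1
  -- bounds for Lipschitz
  obtain ⟨R₀, hR₀⟩ := hScpt.isBounded.subset_closedBall 0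
  set R₁ := max R₀ 0 with hR₁def
  have hSnorm : ∀ s ∈ S, ‖s‖ ≤ R₁ := fun s hs =>
    le_trans (mem_closedBall_zero_iff.mp (hR₀ hs)) (le_max_left _ _)
  obtain ⟨C, hC⟩ := exists_bound hbcont hblim (R₁ + 1)
  have hUle : ∀ x : EuclideanSpace ℝ (Fin n), ‖x‖ ≤ R₁ + 1 → U x ≤ C := by
    intro x hx
    refine csSup_le ⟨_, Set.mem_image_of_mem _ hs₀⟩ ?_
    rintro _ ⟨s', hs', rfl⟩
    show agentPayoff b m s' x ≤ C
    rw [hpay s' hs' x]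
    exact agentPayoff_le' (hmP s' hs') (hmI s' hs') (hmB s' hs') hC hx
  set M : ℝ := ‖∫ a, a ∂(m s₀)‖ * R₁ - ∫ a, b a ∂(m s₀) with hMdef
  have hMle : ∀ s ∈ S, -M ≤ U s := by
    intro s hs
    have h1 := hUge s₀ hs₀ s
    simp only [agentPayoff] at h1
    have h2 := abs_real_inner_le_norm (∫ a, a ∂(m s₀)) s
    have h3 := neg_abs_le (⟪∫ a, a ∂(m s₀), s⟫)
    have h4 := hSnorm s hs
    have h5 := norm_nonneg (∫ a, a ∂(m s₀))
    rw [hMdef]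
    nlinarith
  set L : ℝ := C + M with hLdef
  have hL0 : 0 ≤ L := by
    have h1 := hUle s₀ (by linarith [hSnorm s₀ hs₀])
    have h2 := hMle s₀ hs₀
    rw [hLdef]; linarith
  have hβle : ∀ s ∈ S, ‖∫ a, a ∂(m s)‖ ≤ L := by
    intro s hs
    have key : ∀ w : EuclideanSpace ℝ (Fin n), ‖w‖ ≤ 1 → ⟪∫ a, a ∂(m s), w⟫ ≤ L := by
      intro w hw
      have h1 := hsubm s hs (s + w)
      rw [add_sub_cancel_left] at h1
      have h2 : U (s + w) ≤ C := hUle _ (by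
        calc ‖s + w‖ ≤ ‖s‖ + ‖w‖ := norm_add_le _ _
          _ ≤ R₁ + 1 := add_le_add (hSnorm s hs) hw)
      have h3 := hMle s hs
      rw [hLdef]; linarith
    rcases eq_or_ne (∫ a, a ∂(m s)) 0 with h0 | h0
    · rw [h0, norm_zero]; exact hL0
    · have hpos : 0 < ‖∫ a, a ∂(m s)‖ := norm_pos_iff.mpr h0
      have hw : ‖(‖∫ a, a ∂(m s)‖⁻¹ • (∫ a, a ∂(m s)) : EuclideanSpace ℝ (Fin n))‖ ≤ 1 := by
        rw [norm_smul, norm_inv, norm_norm, inv_mul_cancel₀ (ne_of_gt hpos)]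
      have hk := key _ hw
      rw [real_inner_smul_right, real_inner_self_eq_norm_sq] at hk
      calc ‖∫ a, a ∂(m s)‖ = ‖∫ a, a ∂(m s)‖⁻¹ * ‖∫ a, a ∂(m s)‖ ^ 2 := by
            field_simp
        _ ≤ L := hk
  -- Lipschitz
  have hkey : ∀ x y : EuclideanSpace ℝ (Fin n), U x ≤ U y + L * dist x y := by
    intro x y
    refine csSup_le ⟨_, Set.mem_image_of_mem _ hs₀⟩ ?_
    rintro _ ⟨s', hs', rfl⟩
    have h1 := hexp s' y x
    have h2 := hUge s' hs' y
    have h3 : ⟪∫ a, a ∂(m s'), x - y⟫ ≤ L * dist x y := by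
      have h4 := real_inner_le_norm (∫ a, a ∂(m s')) (x - y)
      have h5 := hβle s' hs'
      rw [dist_eq_norm]
      nlinarith [norm_nonneg (x - y), norm_nonneg (∫ a, a ∂(m s'))]
    simp only []
    linarith
  have hLip : LipschitzWith (Real.toNNReal L) U := by
    apply LipschitzWith.of_dist_le_mul
    intro x y
    rw [Real.coe_toNNReal _ hL0, Real.dist_eq, abs_sub_le_iff]
    constructor
    · linarith [hkey x y]
    · rw [dist_comm] at *
      linarith [hkey y x]
  -- a.e. differentiability
  have hdiff : ∀ᵐ s ∂F, DifferentiableAt ℝ U s :=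
    Filter.Eventually.filter_mono hFac.ae_le
      (hLip.ae_differentiableAt (μ := MeasureTheory.volume))
  -- conclude
  refine setIntegral_congr_ae hScpt.isClosed.measurableSet ?_
  filter_upwards [hdiff] with s hds hsS
  have e1 := fun v => inner_eq_fderiv' (hsubm s hsS) hds v
  have e2 := fun v => inner_eq_fderiv' (hsubm' s hsS) hds v
  have hβeq : (∫ a, a ∂(m s)) = ∫ a, a ∂(m' s) := by
    have hz : ∀ v, ⟪(∫ a, a ∂(m s)) - (∫ a, a ∂(m' s)), v⟫ = (0:ℝ) := by
      intro v
      rw [inner_sub_left, e1 v, e2 v]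
      ring
    have h0 := hz ((∫ a, a ∂(m s)) - (∫ a, a ∂(m' s)))
    rw [inner_self_eq_zero] at h0
    exact sub_eq_zero.mp h0
  have hbeq : (∫ a, b a ∂(m s)) = ∫ a, b a ∂(m' s) := by
    have h1 := hUeq s hsS
    have h2 := hUeq' s hsS
    rw [h1] at h2
    simp only [agentPayoff, hβeq] at h2
    linarith
  rw [principal_integral_eq (hmI s hsS) (hmB s hsS) (g s) κ,
    principal_integral_eq (hmI' s hsS) (hmB' s hsS) (g s) κ, hβeq, hbeq]
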